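/- For every k, IR(NSD^k(Γ), Γ) = IR'(NSD^k(Γ), Γ): a profile σ ∈ NSD^k(Γ) satisfies u_i(σ) ≥ max_{σ'_i ∈ NSD_i^k} min_{τ ∈ NSD_{-i}^k} u_i(σ'_i, τ) for all i if and only if it satisfies the stronger condition u_i(σ) ≥ max_{σ'_i ∈ Σ_i} min_{τ ∈ NSD_{-i}^k} u_i(σ'_i, τ) for all i, where the max ranges over all strategies of the original game. -/

import Mathlib

open Function

section
variable {ι : Type*} [DecidableEq ι] {S : ι → Type*}

noncomputable def minv (u : ι → (∀ j, S j) → ℝ) (i : ι) (T : Set (∀ j, S j)) (σ : S i) : ℝ :=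
  sInf ((fun τ => u i (Function.update τ i σ)) '' T)

noncomputable def maxv (u : ι → (∀ j, S j) → ℝ) (i : ι) (T : Set (∀ j, S j)) (σ : S i) : ℝ :=
  sSup ((fun τ => u i (Function.update τ i σ)) '' T)

/-- `σ'` minimax dominates `σ` for player `i` w.r.t. opponent profile set `T`. -/
def MMDomBy (u : ι → (∀ j, S j) → ℝ) (i : ι) (T : Set (∀ j, S j)) (σ σ' : S i) : Prop :=
  minv u i T σ' > maxv u i T σ

def MMDom (u : ι → (∀ j, S j) → ℝ) (i : ι) (T : Set (∀ j, S j)) (σ : S i) : Prop :=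
  ∃ σ' : S i, MMDomBy u i T σ σ'

/-- Opponent profiles of player `i` compatible with the product set `Z`. -/
def Opp (Z : ∀ j, Set (S j)) (i : ι) : Set (∀ j, S j) := {τ | ∀ j, j ≠ i → τ j ∈ Z j}

/-- Iterated deletion of minimax dominated strategies. -/
noncomputable def NSD (u : ι → (∀ j, S j) → ℝ) : ℕ → ∀ i, Set (S i)
  | 0, _ => Set.univ
  | (k+1), i => {σ ∈ NSD u k i | ¬ MMDom u i (Opp (NSD u k) i) σ}


/-- Individually rational profiles of the subgame restricted to the product set `Z`. -/
noncomputable def IRset {ι : Type*} [DecidableEq ι] {S : ι → Type*}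
    (u : ι → (∀ j, S j) → ℝ) (Z : ∀ j, Set (S j)) : Set (∀ j, S j) :=
  {σ | (∀ j, σ j ∈ Z j) ∧
    ∀ i, u i σ ≥ sSup ((fun σ' => minv u i (Opp Z i) σ') '' Z i)}

/-- The stronger notion where deviations range over all strategies of the original game. -/
noncomputable def IRset' {ι : Type*} [DecidableEq ι] {S : ι → Type*}
    (u : ι → (∀ j, S j) → ℝ) (Z : ∀ j, Set (S j)) : Set (∀ j, S j) :=
  {σ | (∀ j, σ j ∈ Z j) ∧
    ∀ i, u i σ ≥ sSup (Set.range fun σ' : S i => minv u i (Opp Z i) σ')}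
variable {ι : Type*} [Fintype ι] [DecidableEq ι] {S : ι → Type*}
  [∀ i, Fintype (S i)] [∀ i, Nonempty (S i)]


lemma opp_mono {Z Z' : ∀ j, Set (S j)} (h : ∀ j, Z j ⊆ Z' j) (i : ι) :
    Opp Z i ⊆ Opp Z' i := fun τ hτ j hj => h j (hτ j hj)

lemma opp_nonempty {Z : ∀ j, Set (S j)} (h : ∀ j, (Z j).Nonempty) (i : ι) :
    (Opp Z i).Nonempty :=
  ⟨fun j => (h j).choose, fun j _ => (h j).choose_spec⟩

lemma minv_anti (u : ι → (∀ j, S j) → ℝ) (i : ι) {T T' : Set (∀ j, S j)}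
    (hsub : T' ⊆ T) (hne : T'.Nonempty) (σ : S i) :
    minv u i T σ ≤ minv u i T' σ :=
  csInf_le_csInf (Set.Finite.bddBelow (Set.toFinite _)) (hne.image _)
    (Set.image_mono hsub)

lemma minv_le_maxv (u : ι → (∀ j, S j) → ℝ) (i : ι) {T T' : Set (∀ j, S j)}
    (hsub : T' ⊆ T) (hne : T'.Nonempty) (σ : S i) :
    minv u i T' σ ≤ maxv u i T σ := by
  obtain ⟨τ, hτ⟩ := hne
  calc minv u i T' σ ≤ u i (Function.update τ i σ) :=
        csInf_le (Set.Finite.bddBelow (Set.toFinite _)) ⟨τ, hτ, rfl⟩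
    _ ≤ maxv u i T σ :=
        le_csSup (Set.Finite.bddAbove (Set.toFinite _)) ⟨τ, hsub hτ, rfl⟩

lemma nsd_antitone (u : ι → (∀ j, S j) → ℝ) {m k : ℕ} (h : m ≤ k) (i : ι) :
    NSD u k i ⊆ NSD u m i := by
  induction h with
  | refl => exact subset_rfl
  | step _ ih => exact fun σ hσ => ih hσ.1

lemma maximizer_not_dom (u : ι → (∀ j, S j) → ℝ) {K m : ℕ} (hm : m ≤ K)
    (hK : ∀ j, (NSD u K j).Nonempty) {i : ι} {σs : S i}
    (hmax : ∀ σ, minv u i (Opp (NSD u K) i) σ ≤ minv u i (Opp (NSD u K) i) σs) :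
    ¬ MMDom u i (Opp (NSD u m) i) σs := by
  rintro ⟨σ'', hdom⟩
  have hsub : Opp (NSD u K) i ⊆ Opp (NSD u m) i :=
    opp_mono (fun j => nsd_antitone u hm j) i
  have hne : (Opp (NSD u K) i).Nonempty := opp_nonempty hK i
  have h1 : minv u i (Opp (NSD u m) i) σ'' ≤ minv u i (Opp (NSD u K) i) σ'' :=
    minv_anti u i hsub hne σ''
  have h2 : minv u i (Opp (NSD u K) i) σs ≤ maxv u i (Opp (NSD u m) i) σs :=
    minv_le_maxv u i hsub hne σs
  have h3 := hmax σ''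
  have h4 : minv u i (Opp (NSD u m) i) σ'' > maxv u i (Opp (NSD u m) i) σs := hdom
  linarith

lemma maximizer_mem (u : ι → (∀ j, S j) → ℝ) {K : ℕ}
    (hK : ∀ j, (NSD u K j).Nonempty) {i : ι} {σs : S i}
    (hmax : ∀ σ, minv u i (Opp (NSD u K) i) σ ≤ minv u i (Opp (NSD u K) i) σs) :
    ∀ m, m ≤ K → σs ∈ NSD u m i := by
  intro m
  induction m with
  | zero => exact fun _ => Set.mem_univ _
  | succ m ih =>
    intro h
    exact ⟨ih (Nat.le_of_succ_le h), maximizer_not_dom u (Nat.le_of_succ_le h) hK hmax⟩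

lemma nsd_nonempty (u : ι → (∀ j, S j) → ℝ) : ∀ K j, (NSD u K j).Nonempty := by
  intro K
  induction K with
  | zero => exact fun j => ⟨Classical.arbitrary _, Set.mem_univ _⟩
  | succ K ih =>
    intro j
    obtain ⟨σs, hmax⟩ := Finite.exists_max (fun σ : S j => minv u j (Opp (NSD u K) j) σ)
    exact ⟨σs, maximizer_mem u ih hmax K le_rfl, maximizer_not_dom u le_rfl ih hmax⟩

theorem irset_eq_irset' (u : ι → (∀ j, S j) → ℝ) (k : ℕ) :
    IRset u (NSD u k) = IRset' u (NSD u k) := by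
  have key : ∀ i : ι, sSup ((fun σ' => minv u i (Opp (NSD u k) i) σ') '' NSD u k i)
      = sSup (Set.range fun σ' : S i => minv u i (Opp (NSD u k) i) σ') := by
    intro i
    set f := fun σ' : S i => minv u i (Opp (NSD u k) i) σ' with hf
    obtain ⟨σs, hmax⟩ := Finite.exists_max f
    apply le_antisymm
    · refine csSup_le_csSup (Set.Finite.bddAbove (Set.toFinite _))
        ((nsd_nonempty u k i).image f) ?_
      rintro x ⟨σ', _, rfl⟩
      exact ⟨σ', rfl⟩
    · apply csSup_le (Set.range_nonempty f)
      rintro x ⟨σ', rfl⟩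
      calc f σ' ≤ f σs := hmax σ'
        _ ≤ sSup (f '' NSD u k i) :=
          le_csSup (Set.Finite.bddAbove (Set.toFinite _))
            ⟨σs, maximizer_mem u (nsd_nonempty u k) hmax k le_rfl, rfl⟩
  ext σ
  simp only [IRset, IRset', Set.mem_setOf_eq, key]


end
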